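/- arXiv:math/0401039 — 4 statements merged into one kernel-verified Lean document; each statement's English description precedes it below -/
import Mathlib

section
/- Let U ⊆ ℝⁿ be an open convex set and a : ℝⁿ → ℝⁿ a map that is continuously differentiable on U such that all commutator components K_{ij} = ∂a_j/∂x^i − ∂a_i/∂x^j vanish at every point of U (i.e. the 1-form θ = Σᵢ aᵢ dxⁱ is closed on U). Then θ is a differential: there exists f : ℝⁿ → ℝ that is differentiable on U with ∂f/∂x^i = a_i at every point of U. -/
open Metric Set MeasureTheory

lemma pi_single_expand {n : ℕ} (v : Fin n → ℝ) :
    v = ∑ i, v i • (Pi.single i 1 : Fin n → ℝ) := by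
  ext j
  simp [Pi.single_apply]

set_option maxHeartbeats 1000000 in
/-- **Poincaré lemma for 1-forms on a convex open set.**
If `a : ℝⁿ → ℝⁿ` is continuously differentiable on an open convex set `U` and all the
commutator components `K_{ij} = ∂a_j/∂x^i − ∂a_i/∂x^j` vanish on `U` (the 1-form
`θ = Σ aᵢ dxⁱ` is closed on `U`), then `θ` is a differential: there is `f` differentiable
on `U` with `∂f/∂x^i = aᵢ` on `U`. -/
theorem closed_one_form_is_differential_on_convex
    {n : ℕ} (U : Set (Fin n → ℝ)) (hU : IsOpen U) (hconv : Convex ℝ U)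
    (a : (Fin n → ℝ) → (Fin n → ℝ)) (ha : ContDiffOn ℝ 1 a U)
    (hclosed : ∀ x ∈ U, ∀ i j : Fin n,
      fderiv ℝ (fun y => a y j) x (Pi.single i 1) =
      fderiv ℝ (fun y => a y i) x (Pi.single j 1)) :
    ∃ f : (Fin n → ℝ) → ℝ, DifferentiableOn ℝ f U ∧
      ∀ x ∈ U, ∀ i : Fin n, fderiv ℝ f x (Pi.single i 1) = a x i := by
  classical
  rcases Set.eq_empty_or_nonempty U with hUe | ⟨x₀, hx₀⟩
  · subst hUe
    exact ⟨fun _ => 0, differentiableOn_const 0, fun x hx => absurd hx (Set.notMem_empty x)⟩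
  -- the 1-form as a continuous-linear-map-valued function
  set ω : (Fin n → ℝ) → ((Fin n → ℝ) →L[ℝ] ℝ) :=
    fun y => ∑ i, a y i • (ContinuousLinearMap.proj i : (Fin n → ℝ) →L[ℝ] ℝ) with hωdef
  have hωval : ∀ y v, ω y v = ∑ i, a y i * v i := by
    intro y v
    simp [hωdef]
  have hacoord : ∀ i, ContDiffOn ℝ 1 (fun y => a y i) U := fun i => by
    exact (ContinuousLinearMap.proj i).contDiff.comp_contDiffOn ha
  have hωcd : ContDiffOn ℝ 1 ω U :=
    ContDiffOn.sum fun i _ => (hacoord i).smul contDiffOn_const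
  have hωdiff : ∀ p ∈ U, HasFDerivAt ω (fderiv ℝ ω p) p := fun p hp =>
    ((hωcd.differentiableOn one_ne_zero p hp).differentiableAt (hU.mem_nhds hp)).hasFDerivAt
  have hflip : ∀ p ∈ U, ∀ v u, fderiv ℝ (fun y => ω y v) p u = fderiv ℝ ω p u v := by
    intro p hp v u
    have h := (hωdiff p hp).clm_apply (hasFDerivAt_const v p)
    rw [h.fderiv]
    simp
  have hsingle : ∀ y, ∀ j : Fin n, ω y (Pi.single j 1) = a y j := by
    intro y j
    rw [hωval]
    simp [Pi.single_apply]
  have hbasis : ∀ p ∈ U, ∀ i j : Fin n,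
      fderiv ℝ ω p (Pi.single i 1) (Pi.single j 1)
        = fderiv ℝ ω p (Pi.single j 1) (Pi.single i 1) := by
    intro p hp i j
    have e : ∀ k : Fin n, (fun y => ω y (Pi.single k 1)) = fun y => a y k := fun k =>
      funext fun y => hsingle y k
    rw [← hflip p hp (Pi.single j 1) (Pi.single i 1),
      ← hflip p hp (Pi.single i 1) (Pi.single j 1), e i, e j]
    exact hclosed p hp i j
  have hsym : ∀ p ∈ U, ∀ u w, fderiv ℝ ω p u w = fderiv ℝ ω p w u := by
    intro p hp u w
    rw [pi_single_expand u, pi_single_expand w]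
    simp only [map_sum, ContinuousLinearMap.coe_sum', Finset.sum_apply]
    rw [Finset.sum_comm]
    refine Finset.sum_congr rfl fun i _ => Finset.sum_congr rfl fun j _ => ?_
    simp only [ContinuousLinearMap.map_smul, ContinuousLinearMap.smul_apply, smul_eq_mul]
    rw [hbasis p hp j i]
    ring
  -- the potential function
  set f : (Fin n → ℝ) → ℝ :=
    fun y => ∫ t in (0:ℝ)..1, ω (x₀ + t • (y - x₀)) (y - x₀) with hfdef
  have key : ∀ x ∈ U, HasFDerivAt f (ω x) x := by
    intro x hx
    set c : (Fin n → ℝ) → ℝ → (Fin n → ℝ) := fun y t => x₀ + t • (y - x₀) with hcdef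
    have hseg : ∀ t ∈ Icc (0:ℝ) 1, c x t ∈ U := by
      intro t ht
      have h := hconv.segment_subset hx₀ hx
      rw [segment_eq_image'] at h
      exact h ⟨t, ht, rfl⟩
    have hccont : ∀ y, Continuous (fun t : ℝ => c y t) := fun y =>
      continuous_const.add (continuous_id.smul continuous_const)
    have hKc : IsCompact ((fun t => c x t) '' Icc (0:ℝ) 1) :=
      isCompact_Icc.image (hccont x)
    set K := (fun t => c x t) '' Icc (0:ℝ) 1 with hKdef
    have hKU : K ⊆ U := by rintro _ ⟨t, ht, rfl⟩; exact hseg t ht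
    obtain ⟨δ, δpos, hδ⟩ := hKc.exists_thickening_subset_open hU hKU
    set K' := Metric.cthickening (δ/2) K with hK'def
    have hK'c : IsCompact K' := hKc.cthickening
    have hK'U : K' ⊆ U :=
      (Metric.cthickening_subset_thickening' δpos (by linarith) K).trans hδ
    have hmem : ∀ y ∈ Metric.ball x (δ/2), ∀ t ∈ Icc (0:ℝ) 1, c y t ∈ K' := by
      intro y hy t ht
      refine Metric.mem_cthickening_of_dist_le (c y t) (c x t) _ _ ⟨t, ht, rfl⟩ ?_
      have : dist (c y t) (c x t) = |t| * ‖y - x‖ := by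
        rw [dist_eq_norm]
        have : c y t - c x t = t • (y - x) := by
          simp only [hcdef]
          rw [smul_sub, smul_sub, smul_sub]
          abel
        rw [this, norm_smul, Real.norm_eq_abs]
      rw [this]
      have h1 : |t| ≤ 1 := by
        rw [abs_le]; constructor <;> [linarith [ht.1]; linarith [ht.2]]
      have h2 : ‖y - x‖ ≤ δ/2 := by
        rw [← dist_eq_norm]; exact le_of_lt (Metric.mem_ball.mp hy)
      calc |t| * ‖y - x‖ ≤ 1 * (δ/2) :=
            mul_le_mul h1 h2 (norm_nonneg _) zero_le_one
        _ = δ/2 := one_mul _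
    obtain ⟨C₁, hC₁⟩ := hK'c.exists_bound_of_continuousOn (hωcd.continuousOn.mono hK'U)
    obtain ⟨C₂, hC₂⟩ := hK'c.exists_bound_of_continuousOn
      ((hωcd.continuousOn_fderiv_of_isOpen hU le_rfl).mono hK'U)
    have hxK' : x ∈ K' := by
      refine Metric.self_subset_cthickening _ ⟨1, by norm_num, ?_⟩
      simp [hcdef]
    have hC₁0 : 0 ≤ C₁ := le_trans (norm_nonneg _) (hC₁ x hxK')
    have hC₂0 : 0 ≤ C₂ := le_trans (norm_nonneg _) (hC₂ x hxK')
    set R := ‖x - x₀‖ + δ/2 with hRdef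
    have hR0 : 0 ≤ R := by positivity
    set F : (Fin n → ℝ) → ℝ → ℝ := fun y t => ω (c y t) (y - x₀) with hFdef
    set F' : (Fin n → ℝ) → ℝ → ((Fin n → ℝ) →L[ℝ] ℝ) :=
      fun y t => ω (c y t) + t • ((fderiv ℝ ω (c y t)).flip (y - x₀)) with hF'def
    have hιsub : Set.uIoc (0:ℝ) 1 ⊆ Icc (0:ℝ) 1 := by
      rw [Set.uIoc_of_le zero_le_one]; exact Set.Ioc_subset_Icc_self
    -- continuity of ω along curves
    have hcurve : ∀ y ∈ Metric.ball x (δ/2),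
        ContinuousOn (fun t => ω (c y t)) (Icc (0:ℝ) 1) := by
      intro y hy
      have := ContinuousOn.comp hωcd.continuousOn (hccont y).continuousOn
        (fun t ht => hK'U (hmem y hy t ht))
      exact this
    have hcurvex : ContinuousOn (fun t => ω (c x t)) (Icc (0:ℝ) 1) := by
      have := ContinuousOn.comp hωcd.continuousOn (hccont x).continuousOn hseg
      exact this
    have hcurvex' : ContinuousOn (fun t => fderiv ℝ ω (c x t)) (Icc (0:ℝ) 1) := by
      have := ContinuousOn.comp (hωcd.continuousOn_fderiv_of_isOpen hU le_rfl)
        (hccont x).continuousOn hseg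
      exact this
    have hF'contx : ContinuousOn (fun t => F' x t) (Icc (0:ℝ) 1) := by
      refine ContinuousOn.add hcurvex ?_
      refine ContinuousOn.smul continuousOn_id ?_
      have hflipcont : Continuous (fun L : (Fin n → ℝ) →L[ℝ] ((Fin n → ℝ) →L[ℝ] ℝ) => L.flip) :=
        (ContinuousLinearMap.flipₗᵢ ℝ (Fin n → ℝ) (Fin n → ℝ) ℝ).continuous
      exact ((hflipcont.comp_continuousOn hcurvex').clm_apply continuousOn_const)
    have hF_meas : ∀ᶠ y in nhds x, AEStronglyMeasurable (F y)
        (volume.restrict (Set.uIoc (0:ℝ) 1)) := by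
      filter_upwards [Metric.ball_mem_nhds x (half_pos δpos)] with y hy
      have hcont : ContinuousOn (fun t => F y t) (Icc (0:ℝ) 1) :=
        (hcurve y hy).clm_apply continuousOn_const
      exact (hcont.mono hιsub).aestronglyMeasurable measurableSet_uIoc
    have hF_int : IntervalIntegrable (F x) volume 0 1 := by
      apply ContinuousOn.intervalIntegrable
      rw [Set.uIcc_of_le zero_le_one]
      exact hcurvex.clm_apply continuousOn_const
    have hF'_meas : AEStronglyMeasurable (F' x) (volume.restrict (Set.uIoc (0:ℝ) 1)) :=
      (hF'contx.mono hιsub).aestronglyMeasurable measurableSet_uIoc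
    have h_bound : ∀ᵐ t ∂(volume : Measure ℝ), t ∈ Set.uIoc (0:ℝ) 1 →
        ∀ y ∈ Metric.ball x (δ/2), ‖F' y t‖ ≤ C₁ + C₂ * R := by
      refine ae_of_all _ fun t ht y hy => ?_
      have htI : t ∈ Icc (0:ℝ) 1 := hιsub ht
      have hcy : c y t ∈ K' := hmem y hy t htI
      have h1 : |t| ≤ 1 := by
        rw [abs_le]; exact ⟨by linarith [htI.1], htI.2⟩
      have h2 : ‖y - x₀‖ ≤ R := by
        calc ‖y - x₀‖ ≤ ‖y - x‖ + ‖x - x₀‖ := norm_sub_le_norm_sub_add_norm_sub y x x₀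
          _ ≤ δ/2 + ‖x - x₀‖ := by
              have : ‖y - x‖ ≤ δ/2 := by
                rw [← dist_eq_norm]; exact le_of_lt (Metric.mem_ball.mp hy)
              linarith
          _ = R := by rw [hRdef]; ring
      calc ‖F' y t‖ ≤ ‖ω (c y t)‖ + ‖t • ((fderiv ℝ ω (c y t)).flip (y - x₀))‖ :=
            norm_add_le _ _
        _ = ‖ω (c y t)‖ + |t| * ‖(fderiv ℝ ω (c y t)).flip (y - x₀)‖ := by
            rw [norm_smul, Real.norm_eq_abs]
        _ ≤ C₁ + 1 * (C₂ * R) := by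
            have hb1 : ‖ω (c y t)‖ ≤ C₁ := hC₁ _ hcy
            have hb2 : ‖(fderiv ℝ ω (c y t)).flip (y - x₀)‖ ≤ C₂ * R := by
              calc ‖(fderiv ℝ ω (c y t)).flip (y - x₀)‖
                  ≤ ‖(fderiv ℝ ω (c y t)).flip‖ * ‖y - x₀‖ :=
                    ContinuousLinearMap.le_opNorm _ _
                _ = ‖fderiv ℝ ω (c y t)‖ * ‖y - x₀‖ := by
                    rw [ContinuousLinearMap.opNorm_flip]
                _ ≤ C₂ * R := mul_le_mul (hC₂ _ hcy) h2 (norm_nonneg _) hC₂0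
            have := mul_le_mul h1 hb2 (norm_nonneg _) zero_le_one
            linarith
        _ = C₁ + C₂ * R := by ring
    have h_diff : ∀ᵐ t ∂(volume : Measure ℝ), t ∈ Set.uIoc (0:ℝ) 1 →
        ∀ y ∈ Metric.ball x (δ/2), HasFDerivAt (fun y' => F y' t) (F' y t) y := by
      refine ae_of_all _ fun t ht y hy => ?_
      have htI : t ∈ Icc (0:ℝ) 1 := hιsub ht
      have hcyU : c y t ∈ U := hK'U (hmem y hy t htI)
      have h1 : HasFDerivAt (fun y' => c y' t)
          (t • ContinuousLinearMap.id ℝ (Fin n → ℝ)) y := by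
        simp only [hcdef]
        exact (((hasFDerivAt_id y).sub_const x₀).const_smul t).const_add x₀
      have h2 : HasFDerivAt (fun y' => ω (c y' t))
          ((fderiv ℝ ω (c y t)).comp (t • ContinuousLinearMap.id ℝ (Fin n → ℝ))) y :=
        HasFDerivAt.comp (g := ω) y (hωdiff (c y t) hcyU) h1
      have h3 : HasFDerivAt (fun y' : Fin n → ℝ => y' - x₀)
          (ContinuousLinearMap.id ℝ (Fin n → ℝ)) y := (hasFDerivAt_id y).sub_const x₀
      have h4 := h2.clm_apply h3
      refine h4.congr_fderiv ?_
      ext v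
      simp only [hF'def, ContinuousLinearMap.add_apply, ContinuousLinearMap.coe_comp',
        Function.comp_apply, ContinuousLinearMap.coe_id', id_eq,
        ContinuousLinearMap.flip_apply, ContinuousLinearMap.smul_apply,
        ContinuousLinearMap.coe_smul', Pi.smul_apply, smul_eq_mul,
        ContinuousLinearMap.map_smul]
    have main := intervalIntegral.hasFDerivAt_integral_of_dominated_of_fderiv_le
      (μ := volume) (F := F) (F' := F') (bound := fun _ => C₁ + C₂ * R)
      (Metric.ball_mem_nhds x (half_pos δpos)) hF_meas hF_int hF'_meas h_bound intervalIntegrable_const h_diff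
    -- FTC: compute the integral of F' x
    have hG : ∀ t ∈ Set.uIcc (0:ℝ) 1, HasDerivAt (fun s => s • ω (c x s)) (F' x t) t := by
      intro t ht
      rw [Set.uIcc_of_le zero_le_one] at ht
      have hmemU : c x t ∈ U := hseg t ht
      have hcd : HasDerivAt (fun s : ℝ => c x s) (x - x₀) t := by
        have h := ((hasDerivAt_id t).smul_const (x - x₀)).const_add x₀
        simpa [hcdef] using h
      have h2 : HasDerivAt (fun s => ω (c x s)) (fderiv ℝ ω (c x t) (x - x₀)) t :=
        (hωdiff _ hmemU).comp_hasDerivAt t hcd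
      have h3 := (hasDerivAt_id t).smul h2
      refine h3.congr_deriv ?_
      ext v
      simp only [hF'def, ContinuousLinearMap.add_apply, ContinuousLinearMap.smul_apply,
        ContinuousLinearMap.flip_apply, smul_eq_mul, id_eq, one_smul,
        ContinuousLinearMap.coe_smul', Pi.smul_apply, ContinuousLinearMap.coe_add',
        Pi.add_apply]
      rw [hsym _ hmemU v (x - x₀)]
      ring
    have hF'int : IntervalIntegrable (F' x) volume 0 1 := by
      apply ContinuousOn.intervalIntegrable
      rw [Set.uIcc_of_le zero_le_one]
      exact hF'contx
    have hFTC := intervalIntegral.integral_eq_sub_of_hasDerivAt hG hF'int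
    have hc1 : c x 1 = x := by simp [hcdef]
    have hval : (∫ t in (0:ℝ)..1, F' x t) = ω x := by
      rw [hFTC, hc1]
      simp
    rw [hval] at main
    exact main
  refine ⟨f, fun x hx => (key x hx).differentiableAt.differentiableWithinAt,
    fun x hx i => ?_⟩
  rw [(key x hx).fderiv]
  exact hsingle x i
end

section
/- Let E and F be real normed vector spaces, and let ω : E → (E →L[ℝ] ℝ) be a C¹ differential 1-form that is closed, i.e. at every x ∈ E its Fréchet derivative is symmetric: (Dω(x) v)(w) = (Dω(x) w)(v) for all v, w ∈ E. Let φ : F → E be a C² map. Then the pullback 1-form φ*ω : F → (F →L[ℝ] ℝ), defined by (φ*ω)(y)(w) = ω(φ(y))(Dφ(y) w), is also closed: at every y ∈ F its Fréchet derivative is symmetric, (D(φ*ω)(y) v)(w) = (D(φ*ω)(y) w)(v) for all v, w ∈ F. -/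
/-- **Invariance of closedness under pullback.**
If `ω : E → (E →L[ℝ] ℝ)` is a C¹ differential 1-form which is closed (its Fréchet
derivative is symmetric at every point) and `φ : F → E` is a C² map, then the pullback
1-form `φ*ω`, defined by `(φ*ω)(y)(w) = ω(φ(y))(Dφ(y) w)`, is also closed. -/
theorem pullback_of_closed_one_form_is_closed
    {E F : Type*} [NormedAddCommGroup E] [NormedSpace ℝ E]
    [NormedAddCommGroup F] [NormedSpace ℝ F]
    (ω : E → (E →L[ℝ] ℝ)) (hω : ContDiff ℝ 1 ω)
    (hclosed : ∀ x : E, ∀ v w : E, fderiv ℝ ω x v w = fderiv ℝ ω x w v)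
    (φ : F → E) (hφ : ContDiff ℝ 2 φ) :
    ∀ y : F, ∀ v w : F,
      fderiv ℝ (fun z => (ω (φ z)).comp (fderiv ℝ φ z)) y v w =
      fderiv ℝ (fun z => (ω (φ z)).comp (fderiv ℝ φ z)) y w v := by
  intro y v w
  have hφ1 : ContDiff ℝ 1 φ := hφ.of_le one_le_two
  have hdφ : ContDiff ℝ 1 (fderiv ℝ φ) := by
    have := (contDiff_succ_iff_fderiv (n := 1)).mp (by norm_num at hφ ⊢; exact hφ)
    exact this.2.2
  have hc : HasFDerivAt (fun z => ω (φ z)) ((fderiv ℝ ω (φ y)).comp (fderiv ℝ φ y)) y :=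
    (hω.differentiable one_ne_zero (φ y)).hasFDerivAt.comp y
      (hφ1.differentiable one_ne_zero y).hasFDerivAt
  have hd : HasFDerivAt (fderiv ℝ φ) (fderiv ℝ (fderiv ℝ φ) y) y :=
    (hdφ.differentiable one_ne_zero y).hasFDerivAt
  rw [(hc.clm_comp hd).fderiv]
  have hsymm := (hφ.contDiffAt (x := y)).isSymmSndFDerivAt (by simp [minSmoothness_of_isRCLikeNormedField])
  simp only [ContinuousLinearMap.add_apply, ContinuousLinearMap.coe_comp', Function.comp_apply,
    ContinuousLinearMap.compL_apply, ContinuousLinearMap.flip_apply,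
    ContinuousLinearMap.coe_comp']
  rw [hsymm v w, hclosed]
end

section
/- Let U ⊆ ℂ be open and convex and let u : ℂ → ℝ be twice continuously differentiable on U with u_xx + u_yy = 0 at every point of U (u is harmonic on U). Then there exists v : ℂ → ℝ such that f = u + i·v is complex differentiable at every point of U; that is, the closed dual form *θ = −u_y dx + u_x dy is a differential dv on U, and u, v are conjugated harmonic functions. -/
/-- The partial derivative of `g : ℂ → ℝ` at `z` in the direction `1`:
`g_x(z) = d/dt g(z + t)|_{t=0}` with `t` real. -/
noncomputable def partialX (g : ℂ → ℝ) : ℂ → ℝ :=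
  fun z => deriv (fun t : ℝ => g (z + (t : ℂ))) 0

/-- The partial derivative of `g : ℂ → ℝ` at `z` in the direction `i`:
`g_y(z) = d/dt g(z + t·i)|_{t=0}` with `t` real. -/
noncomputable def partialY (g : ℂ → ℝ) : ℂ → ℝ :=
  fun z => deriv (fun t : ℝ => g (z + (t : ℂ) * Complex.I)) 0

open Complex Metric MeasureTheory intervalIntegral Set

/-- Directional partial derivative. -/
noncomputable def pd (e : ℂ) (g : ℂ → ℝ) (z : ℂ) : ℝ :=
  deriv (fun t : ℝ => g (z + (t : ℂ) * e)) 0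

lemma hasDerivAt_line (w e : ℂ) : HasDerivAt (fun t : ℝ => w + (t : ℂ) * e) e 0 := by
  simpa using ((Complex.ofRealCLM.hasDerivAt (x := (0:ℝ))).mul_const e).const_add w

lemma pd_eq (e : ℂ) {g : ℂ → ℝ} {w : ℂ} (h : DifferentiableAt ℝ g w) :
    pd e g w = fderiv ℝ g w e := by
  have h' : HasFDerivAt g (fderiv ℝ g w) ((fun t : ℝ => w + (t : ℂ) * e) 0) := by
    simpa using h.hasFDerivAt
  have := h'.comp_hasDerivAt 0 (hasDerivAt_line w e)
  simpa [pd, Function.comp_def] using this.deriv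

lemma pd2 (e₁ e₂ : ℂ) {U : Set ℂ} (hU : IsOpen U) {z : ℂ} (hz : z ∈ U) {g : ℂ → ℝ}
    (hg : ∀ w ∈ U, DifferentiableAt ℝ g w)
    (hg' : DifferentiableAt ℝ (fderiv ℝ g) z) :
    pd e₁ (pd e₂ g) z = fderiv ℝ (fderiv ℝ g) z e₁ e₂ := by
  set H := fderiv ℝ (fderiv ℝ g) z with hH
  have hev : pd e₂ g =ᶠ[nhds z] fun w => fderiv ℝ g w e₂ := by
    filter_upwards [hU.mem_nhds hz] with w hw using pd_eq e₂ (hg w hw)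
  have hten : Filter.Tendsto (fun t : ℝ => z + (t : ℂ) * e₁) (nhds 0) (nhds z) := by
    have := (hasDerivAt_line z e₁).continuousAt.tendsto
    simpa using this
  have heq2 : (fun t : ℝ => pd e₂ g (z + (t : ℂ) * e₁)) =ᶠ[nhds 0]
      (fun t : ℝ => fderiv ℝ g (z + (t : ℂ) * e₁) e₂) := hev.comp_tendsto hten
  have h' : HasFDerivAt (fderiv ℝ g) H ((fun t : ℝ => z + (t : ℂ) * e₁) 0) := by
    simpa using hg'.hasFDerivAt
  have hcd : HasDerivAt (fun t : ℝ => fderiv ℝ g (z + (t : ℂ) * e₁)) (H e₁) 0 :=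
    h'.comp_hasDerivAt 0 (hasDerivAt_line z e₁)
  have hfin : HasDerivAt (fun t : ℝ => fderiv ℝ g (z + (t : ℂ) * e₁) e₂) (H e₁ e₂) 0 := by
    simpa using hcd.clm_apply (hasDerivAt_const 0 e₂)
  show deriv (fun t : ℝ => pd e₂ g (z + (t : ℂ) * e₁)) 0 = H e₁ e₂
  rw [heq2.deriv_eq]
  exact hfin.deriv

/-- Poincaré lemma on a convex open set in `ℂ`, for `ℝ`-valued 1-forms. -/
lemma poincare_convex {U : Set ℂ} (hU : IsOpen U) (hconv : Convex ℝ U) {z₀ : ℂ} (hz₀ : z₀ ∈ U)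
    {ω : ℂ → (ℂ →L[ℝ] ℝ)} (hω : ContDiffOn ℝ 1 ω U)
    (hsymm : ∀ z ∈ U, ∀ a b : ℂ, fderiv ℝ ω z a b = fderiv ℝ ω z b a) :
    ∃ v : ℂ → ℝ, ∀ z ∈ U, HasFDerivAt v (ω z) z := by
  have hωc : ContinuousOn ω U := hω.continuousOn
  have hdωc : ContinuousOn (fderiv ℝ ω) U := hω.continuousOn_fderiv_of_isOpen hU le_rfl
  have hωd : ∀ p ∈ U, HasFDerivAt ω (fderiv ℝ ω p) p := fun p hp =>
    (((hω.differentiableOn one_ne_zero) p hp).differentiableAt (hU.mem_nhds hp)).hasFDerivAt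
  refine ⟨fun w => ∫ t in (0:ℝ)..1, ω (z₀ + t • (w - z₀)) (w - z₀), fun z hz => ?_⟩
  obtain ⟨ε, εpos, hball⟩ : ∃ ε > 0, closedBall z ε ⊆ U := by
    rcases Metric.isOpen_iff.1 hU z hz with ⟨δ, δpos, hδ⟩
    refine ⟨δ/2, by linarith, fun x hx => hδ ?_⟩
    have := mem_closedBall.1 hx
    exact mem_ball.2 (lt_of_le_of_lt this (by linarith))
  have hmem : ∀ t ∈ Set.Icc (0:ℝ) 1, ∀ w ∈ closedBall z ε, z₀ + t • (w - z₀) ∈ U := by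
    intro t ht w hw
    have h : z₀ + t • (w - z₀) = (1 - t) • z₀ + t • w := by
      module
    rw [h]
    exact hconv hz₀ (hball hw) (by linarith [ht.2]) ht.1 (by ring)
  set K : Set ℂ := (fun p : ℝ × ℂ => z₀ + p.1 • (p.2 - z₀)) '' (Set.Icc 0 1 ×ˢ closedBall z ε)
    with hK
  have hKco : IsCompact K :=
    (isCompact_Icc.prod (isCompact_closedBall z ε)).image (by fun_prop)
  have hKU : K ⊆ U := by
    rintro _ ⟨⟨t, w⟩, ⟨ht, hw⟩, rfl⟩
    exact hmem t ht w hw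
  obtain ⟨C₁, hC₁⟩ := hKco.exists_bound_of_continuousOn (hωc.mono hKU)
  obtain ⟨C₂, hC₂⟩ := hKco.exists_bound_of_continuousOn (f := fderiv ℝ ω) (hdωc.mono hKU)
  have hKmem : ∀ t ∈ Set.Icc (0:ℝ) 1, ∀ w ∈ closedBall z ε, z₀ + t • (w - z₀) ∈ K := by
    intro t ht w hw
    exact ⟨(t, w), ⟨ht, hw⟩, rfl⟩
  have hzK : z₀ ∈ K := by
    have := hKmem 0 (by norm_num) z (mem_closedBall_self εpos.le)
    simpa using this
  have hC₂0 : 0 ≤ C₂ := le_trans (norm_nonneg _) (hC₂ _ hzK)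
  set R : ℝ := ‖z - z₀‖ + ε with hR
  have hRb : ∀ w ∈ closedBall z ε, ‖w - z₀‖ ≤ R := by
    intro w hw
    have h1 : w - z₀ = (w - z) + (z - z₀) := by ring
    have h2 := mem_closedBall_iff_norm.1 hw
    calc ‖w - z₀‖ = ‖(w - z) + (z - z₀)‖ := by rw [← h1]
      _ ≤ ‖w - z‖ + ‖z - z₀‖ := norm_add_le _ _
      _ ≤ R := by rw [hR]; linarith
  set F' : ℂ → ℝ → (ℂ →L[ℝ] ℝ) := fun w t =>
    t • ((fderiv ℝ ω (z₀ + t • (w - z₀))).flip (w - z₀)) + ω (z₀ + t • (w - z₀)) with hF'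
  have hγcont : ∀ w : ℂ, Continuous (fun t : ℝ => z₀ + t • (w - z₀)) := by
    intro w; fun_prop
  have hflip : Continuous fun L : ℂ →L[ℝ] (ℂ →L[ℝ] ℝ) => L.flip (z - z₀) := by
    have h1 : Continuous fun L : ℂ →L[ℝ] (ℂ →L[ℝ] ℝ) =>
        (ContinuousLinearMap.flipₗᵢ ℝ ℂ ℂ ℝ) L := (ContinuousLinearMap.flipₗᵢ ℝ ℂ ℂ ℝ).continuous
    exact h1.clm_apply continuous_const
  have hFcont : ∀ w ∈ closedBall z ε,
      ContinuousOn (fun t : ℝ => ω (z₀ + t • (w - z₀)) (w - z₀)) (Set.Icc 0 1) := by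
    intro w hw
    exact (hωc.comp (hγcont w).continuousOn (fun t ht => hmem t ht w hw)).clm_apply
      continuousOn_const
  have hzball : z ∈ closedBall z ε := mem_closedBall_self εpos.le
  have hγzcont : ContinuousOn (fun t : ℝ => fderiv ℝ ω (z₀ + t • (z - z₀))) (Set.Icc 0 1) :=
    hdωc.comp (hγcont z).continuousOn (fun t ht => hmem t ht z hzball)
  have hF'cont : ContinuousOn (fun t : ℝ => F' z t) (Set.Icc 0 1) := by
    apply ContinuousOn.add
    · exact continuousOn_id.smul (hflip.comp_continuousOn hγzcont)
    · exact hωc.comp (hγcont z).continuousOn (fun t ht => hmem t ht z hzball)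
  -- differentiation under the integral sign
  have hIoc : Set.uIoc (0:ℝ) 1 ⊆ Set.Icc 0 1 := by
    rw [Set.uIoc_of_le (by norm_num : (0:ℝ) ≤ 1)]
    exact Set.Ioc_subset_Icc_self
  have huIcc : Set.uIcc (0:ℝ) 1 = Set.Icc 0 1 := Set.uIcc_of_le (by norm_num)
  have meas1 : ∀ᶠ w in nhds z, AEStronglyMeasurable
      (fun t : ℝ => ω (z₀ + t • (w - z₀)) (w - z₀)) (volume.restrict (Set.uIoc (0:ℝ) 1)) := by
    filter_upwards [closedBall_mem_nhds z εpos] with w hw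
    exact ((hFcont w hw).mono hIoc).aestronglyMeasurable measurableSet_uIoc
  have int1 : IntervalIntegrable (fun t : ℝ => ω (z₀ + t • (z - z₀)) (z - z₀)) volume 0 1 := by
    apply ContinuousOn.intervalIntegrable
    rw [huIcc]; exact hFcont z hzball
  have meas2 : AEStronglyMeasurable (F' z) (volume.restrict (Set.uIoc (0:ℝ) 1)) :=
    (hF'cont.mono hIoc).aestronglyMeasurable measurableSet_uIoc
  have bound1 : ∀ᵐ t ∂(volume : Measure ℝ), t ∈ Set.uIoc (0:ℝ) 1 →
      ∀ w ∈ ball z ε, ‖F' w t‖ ≤ C₂ * R + C₁ := by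
    refine Filter.Eventually.of_forall (fun t ht w hw => ?_)
    have ht' : t ∈ Set.Icc (0:ℝ) 1 := hIoc ht
    have hwU : w ∈ closedBall z ε := ball_subset_closedBall hw
    have hpK := hKmem t ht' w hwU
    refine le_trans (norm_add_le _ _) ?_
    have h1 : ‖t • ((fderiv ℝ ω (z₀ + t • (w - z₀))).flip (w - z₀))‖ ≤ C₂ * R := by
      rw [norm_smul]
      have ht1 : |t| ≤ 1 := by
        rw [Set.uIoc_of_le (by norm_num : (0:ℝ) ≤ 1)] at ht
        rw [_root_.abs_of_nonneg ht.1.le]; exact ht.2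
      have h2 : ‖(fderiv ℝ ω (z₀ + t • (w - z₀))).flip (w - z₀)‖ ≤ C₂ * R := by
        refine le_trans ((fderiv ℝ ω (z₀ + t • (w - z₀))).flip.le_opNorm _) ?_
        rw [ContinuousLinearMap.opNorm_flip]
        exact mul_le_mul (hC₂ _ hpK) (hRb w hwU) (norm_nonneg _) hC₂0
      calc ‖t‖ * ‖(fderiv ℝ ω (z₀ + t • (w - z₀))).flip (w - z₀)‖
          ≤ 1 * (C₂ * R) := by
            refine mul_le_mul ht1 h2 (norm_nonneg _) (by norm_num)
        _ = C₂ * R := one_mul _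
    have h2 := hC₁ _ hpK
    linarith [h1, h2]
  have diff1 : ∀ᵐ t ∂(volume : Measure ℝ), t ∈ Set.uIoc (0:ℝ) 1 → ∀ w ∈ ball z ε,
      HasFDerivAt (fun w : ℂ => ω (z₀ + t • (w - z₀)) (w - z₀)) (F' w t) w := by
    refine Filter.Eventually.of_forall (fun t ht w hw => ?_)
    have ht' : t ∈ Set.Icc (0:ℝ) 1 := hIoc ht
    have hwU : w ∈ closedBall z ε := ball_subset_closedBall hw
    have hpU : z₀ + t • (w - z₀) ∈ U := hmem t ht' w hwU
    have hcurve : HasFDerivAt (fun w : ℂ => z₀ + t • (w - z₀))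
        (t • ContinuousLinearMap.id ℝ ℂ) w :=
      (((hasFDerivAt_id w).sub_const z₀).const_smul t).const_add z₀
    have hc : HasFDerivAt (fun w : ℂ => ω (z₀ + t • (w - z₀)))
        ((fderiv ℝ ω (z₀ + t • (w - z₀))).comp (t • ContinuousLinearMap.id ℝ ℂ)) w :=
      (hωd _ hpU).comp w hcurve
    have hu : HasFDerivAt (fun w : ℂ => w - z₀) (ContinuousLinearMap.id ℝ ℂ) w :=
      (hasFDerivAt_id w).sub_const z₀
    have hca := hc.clm_apply hu
    refine hca.congr_fderiv ?_
    ext h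
    simp only [hF', ContinuousLinearMap.add_apply, ContinuousLinearMap.smul_apply,
      ContinuousLinearMap.flip_apply, ContinuousLinearMap.comp_apply,
      ContinuousLinearMap.coe_id', id_eq, ContinuousLinearMap.map_smul_of_tower,
      smul_eq_mul]
    ring
  have key := intervalIntegral.hasFDerivAt_integral_of_dominated_of_fderiv_le
    (ball_mem_nhds z εpos) meas1 int1 meas2 bound1 intervalIntegrable_const diff1
  -- compute the integral of F' z via FTC
  have hφ : ∀ t ∈ Set.uIcc (0:ℝ) 1,
      HasDerivAt (fun t : ℝ => t • ω (z₀ + t • (z - z₀))) (F' z t) t := by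
    intro t ht
    rw [huIcc] at ht
    have hpU : z₀ + t • (z - z₀) ∈ U := hmem t ht z hzball
    have hγd : HasDerivAt (fun t : ℝ => z₀ + t • (z - z₀)) (z - z₀) t := by
      simpa using ((hasDerivAt_id t).smul_const (z - z₀)).const_add z₀
    have hωγ : HasDerivAt (fun t : ℝ => ω (z₀ + t • (z - z₀)))
        (fderiv ℝ ω (z₀ + t • (z - z₀)) (z - z₀)) t :=
      (hωd _ hpU).comp_hasDerivAt t hγd
    have := (hasDerivAt_id t).smul hωγ
    refine this.congr_deriv ?_
    ext h
    simp only [hF', ContinuousLinearMap.add_apply, ContinuousLinearMap.smul_apply,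
      ContinuousLinearMap.flip_apply, one_smul, id_eq, smul_eq_mul]
    rw [hsymm _ hpU h (z - z₀)]
  have hintF' : IntervalIntegrable (F' z) volume 0 1 := by
    apply ContinuousOn.intervalIntegrable
    rw [huIcc]; exact hF'cont
  have hval : (∫ t in (0:ℝ)..1, F' z t) = ω z := by
    rw [intervalIntegral.integral_eq_sub_of_hasDerivAt hφ hintF']
    simp
  rw [hval] at key
  exact key


/-- **Existence of a conjugated harmonic function.** If `u : ℂ → ℝ` is twice
continuously differentiable on an open convex set `U` and harmonic there
(`u_xx + u_yy = 0` on `U`), then there exists `v : ℂ → ℝ` such that `f = u + i·v`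
is complex differentiable at every point of `U`; the closed dual form
`*θ = −u_y dx + u_x dy` is the differential `dv` on `U`. -/
theorem exists_harmonic_conjugate
    (U : Set ℂ) (hU : IsOpen U) (hconv : Convex ℝ U)
    (u : ℂ → ℝ) (hu : ContDiffOn ℝ 2 u U)
    (hharm : ∀ z ∈ U, partialX (partialX u) z + partialY (partialY u) z = 0) :
    ∃ v : ℂ → ℝ, ∀ z ∈ U,
      DifferentiableAt ℂ (fun w => ((u w : ℂ) + (v w : ℂ) * Complex.I)) z := by
  rcases U.eq_empty_or_nonempty with rfl | ⟨z₀, hz₀⟩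
  · exact ⟨0, fun z hz => absurd hz (Set.notMem_empty z)⟩
  have hdiffU : ∀ w ∈ U, DifferentiableAt ℝ u w := fun w hw =>
    ((hu.differentiableOn (by norm_num)) w hw).differentiableAt (hU.mem_nhds hw)
  have hdu1 : ContDiffOn ℝ 1 (fderiv ℝ u) U := hu.fderiv_of_isOpen hU (by norm_num)
  have hfd' : ∀ w ∈ U, DifferentiableAt ℝ (fderiv ℝ u) w := fun w hw =>
    ((hdu1.differentiableOn one_ne_zero) w hw).differentiableAt (hU.mem_nhds hw)
  -- rewrite hypotheses in terms of pd
  have hpX : partialX = pd 1 := by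
    funext g w
    unfold partialX pd
    congr 1
    funext t
    rw [mul_one]
  have hpY : partialY = pd Complex.I := rfl
  -- harmonicity in terms of the Hessian
  have hharm' : ∀ w ∈ U, fderiv ℝ (fderiv ℝ u) w 1 1 + fderiv ℝ (fderiv ℝ u) w I I = 0 := by
    intro w hw
    have := hharm w hw
    rw [hpX, hpY] at this
    rwa [pd2 1 1 hU hw hdiffU (hfd' w hw), pd2 I I hU hw hdiffU (hfd' w hw)] at this
  -- the dual form ω
  set Nc : ℂ →L[ℝ] ℂ :=
    ((-Complex.I) • ContinuousLinearMap.id ℂ ℂ).restrictScalars ℝ with hNc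
  have hNcapp : ∀ h : ℂ, Nc h = -(Complex.I * h) := by
    intro h
    simp [hNc, ContinuousLinearMap.smul_apply, smul_eq_mul, neg_mul]
  set P : (ℂ →L[ℝ] ℝ) →L[ℝ] (ℂ →L[ℝ] ℝ) :=
    (ContinuousLinearMap.compL ℝ ℂ ℂ ℝ).flip Nc with hP
  set ω : ℂ → (ℂ →L[ℝ] ℝ) := fun w => P (fderiv ℝ u w) with hω
  have hωapp : ∀ w (h : ℂ), ω w h = fderiv ℝ u w (Nc h) := by
    intro w h
    simp [hω, hP, ContinuousLinearMap.flip_apply, ContinuousLinearMap.compL_apply]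
  have hωcd : ContDiffOn ℝ 1 ω U := P.contDiff.comp_contDiffOn hdu1
  have hωfd : ∀ w ∈ U, fderiv ℝ ω w = P.comp (fderiv ℝ (fderiv ℝ u) w) := by
    intro w hw
    exact (P.hasFDerivAt.comp w (hfd' w hw).hasFDerivAt).fderiv
  -- symmetry of the derivative of ω
  have hsymmω : ∀ w ∈ U, ∀ a b : ℂ, fderiv ℝ ω w a b = fderiv ℝ ω w b a := by
    intro w hw a b
    set H := fderiv ℝ (fderiv ℝ u) w with hH
    have hsym : ∀ v₁ v₂ : ℂ, H v₁ v₂ = H v₂ v₁ :=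
      (hu.contDiffAt (hU.mem_nhds hw)).isSymmSndFDerivAt (by simp)
    have hkey : ∀ a b : ℂ, H a b =
        a.re * (b.re * H 1 1 + b.im * H 1 I) + a.im * (b.re * H I 1 + b.im * H I I) := by
      intro a b
      have ha : a = a.re • (1:ℂ) + a.im • Complex.I := by
        apply Complex.ext <;> simp
      have hb : b = b.re • (1:ℂ) + b.im • Complex.I := by
        apply Complex.ext <;> simp
      calc (H a) b = (H (a.re • (1:ℂ) + a.im • Complex.I)) (b.re • (1:ℂ) + b.im • Complex.I) := by
            rw [← ha, ← hb]
        _ = a.re * (b.re * H 1 1 + b.im * H 1 I) + a.im * (b.re * H I 1 + b.im * H I I) := by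
            simp only [map_add, _root_.map_smul, ContinuousLinearMap.add_apply,
              ContinuousLinearMap.coe_smul', Pi.smul_apply, smul_eq_mul]
            ring
    rw [hωfd w hw]
    simp only [ContinuousLinearMap.comp_apply]
    have hPapp : ∀ (L : ℂ →L[ℝ] ℝ) (h : ℂ), P L h = L (Nc h) := by
      intro L h
      simp [hP, ContinuousLinearMap.flip_apply, ContinuousLinearMap.compL_apply]
    rw [hPapp, hPapp]
    rw [hkey a (Nc b), hkey b (Nc a)]
    have e1 : ∀ c : ℂ, (Nc c).re = c.im := by intro c; rw [hNcapp]; simp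
    have e2 : ∀ c : ℂ, (Nc c).im = -c.re := by intro c; rw [hNcapp]; simp
    rw [e1, e2, e1, e2, hsym I 1, show H I I = -H 1 1 by linarith [hharm' w hw]]
    ring
  obtain ⟨v, hv⟩ := poincare_convex hU hconv hz₀ hωcd hsymmω
  refine ⟨v, fun z hz => ?_⟩
  set D := fderiv ℝ u z with hD
  have hDd : HasFDerivAt u D z := (hdiffU z hz).hasFDerivAt
  have h1 : HasFDerivAt (fun w : ℂ => ((u w : ℝ) : ℂ)) (Complex.ofRealCLM.comp D) z :=
    Complex.ofRealCLM.hasFDerivAt.comp z hDd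
  have h2 : HasFDerivAt (fun w : ℂ => ((v w : ℝ) : ℂ)) (Complex.ofRealCLM.comp (ω z)) z :=
    Complex.ofRealCLM.hasFDerivAt.comp z (hv z hz)
  have h3 := h2.mul_const' Complex.I
  have hsum := h1.add h3
  set c : ℂ := ((D 1 : ℝ) : ℂ) - ((D Complex.I : ℝ) : ℂ) * Complex.I with hc
  set L : ℂ →L[ℂ] ℂ := c • ContinuousLinearMap.id ℂ ℂ with hL
  have hDexp : ∀ w : ℂ, D w = w.re * D 1 + w.im * D Complex.I := by
    intro w
    have hw : w = w.re • (1:ℂ) + w.im • Complex.I := by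
      apply Complex.ext <;> simp
    calc D w = D (w.re • (1:ℂ) + w.im • Complex.I) := by rw [← hw]
      _ = w.re * D 1 + w.im * D Complex.I := by
          simp only [map_add, _root_.map_smul, smul_eq_mul]
  have hEq : L.restrictScalars ℝ = Complex.ofRealCLM.comp D +
      (Complex.ofRealCLM.comp (ω z)).smulRight Complex.I := by
    ext h
    simp only [hL, ContinuousLinearMap.coe_restrictScalars', ContinuousLinearMap.smul_apply,
      ContinuousLinearMap.add_apply, ContinuousLinearMap.comp_apply,
      ContinuousLinearMap.smulRight_apply, ContinuousLinearMap.coe_id', id_eq,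
      Complex.ofRealCLM_apply, smul_eq_mul]
    rw [hωapp, hNcapp, hDexp h, hDexp (-(Complex.I * h)), hc]
    apply Complex.ext <;>
      simp [Complex.add_re, Complex.add_im, Complex.mul_re, Complex.mul_im] <;> ring
  have hfin : HasFDerivAt (fun w : ℂ => ((u w : ℂ) + (v w : ℂ) * Complex.I))
      (L.restrictScalars ℝ) z := hEq ▸ hsum
  exact (hasFDerivAt_of_restrictScalars (𝕜 := ℝ) hfin rfl).differentiableAt
end

section
/- Let L : ℝⁿ × ℝⁿ → ℝ be twice continuously differentiable with arguments (q, q̇) (an autonomous Lagrange function), and let q : ℝ → ℝⁿ be a twice continuously differentiable curve satisfying the Euler–Lagrange equations d/dt (∂L/∂q̇ⱼ(q(t), q'(t))) = ∂L/∂qⱼ(q(t), q'(t)) for all j and all t. Then the Hamilton function along the trajectory, H(t) = Σⱼ q'ⱼ(t)·∂L/∂q̇ⱼ(q(t), q'(t)) − L(q(t), q'(t)), is constant in t. -/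
open scoped BigOperators

lemma clm_decomp {n : ℕ} (φ : ((Fin n → ℝ) × (Fin n → ℝ)) →L[ℝ] ℝ) (v w : Fin n → ℝ) :
    φ (v, w) = (∑ j, v j * φ (Pi.single j 1, 0)) + ∑ j, w j * φ (0, Pi.single j 1) := by
  have hvw : (v, w) = (∑ j, v j • ((Pi.single j 1 : Fin n → ℝ), (0 : Fin n → ℝ)))
      + ∑ j, w j • ((0 : Fin n → ℝ), (Pi.single j 1 : Fin n → ℝ)) := by
    ext i
    · simp [Prod.fst_sum, Finset.sum_apply, Pi.single_apply]
    · simp [Prod.snd_sum, Finset.sum_apply, Pi.single_apply]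
  rw [hvw, map_add, map_sum, map_sum]
  simp only [map_smul, smul_eq_mul]

/-- **Conservation of the Hamilton function.** For an autonomous C² Lagrange function
`L(q, q̇)` and a C² trajectory `q` satisfying the Euler–Lagrange equations
`d/dt (∂L/∂q̇ⱼ) = ∂L/∂qⱼ`, the Hamilton function along the trajectory,
`H(t) = Σⱼ q̇ⱼ(t)·∂L/∂q̇ⱼ(q(t), q'(t)) − L(q(t), q'(t))`, is constant in `t`. -/
theorem hamilton_function_constant_along_euler_lagrange
    {n : ℕ} (L : (Fin n → ℝ) × (Fin n → ℝ) → ℝ) (hL : ContDiff ℝ 2 L)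
    (q : ℝ → (Fin n → ℝ)) (hq : ContDiff ℝ 2 q)
    (hEL : ∀ (j : Fin n) (t : ℝ),
      HasDerivAt (fun s => fderiv ℝ L (q s, deriv q s) (0, Pi.single j 1))
        (fderiv ℝ L (q t, deriv q t) (Pi.single j 1, 0)) t) :
    ∀ s t : ℝ,
      (∑ j, deriv q s j * fderiv ℝ L (q s, deriv q s) (0, Pi.single j 1))
          - L (q s, deriv q s) =
        (∑ j, deriv q t j * fderiv ℝ L (q t, deriv q t) (0, Pi.single j 1))
          - L (q t, deriv q t) := by
  set H : ℝ → ℝ := fun s =>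
    (∑ j, deriv q s j * fderiv ℝ L (q s, deriv q s) (0, Pi.single j 1))
      - L (q s, deriv q s) with hH
  have hq' : ContDiff ℝ 1 (deriv q) := by
    have : (2 : WithTop ℕ∞) = 1 + 1 := by norm_num
    rw [this, contDiff_succ_iff_deriv] at hq
    exact hq.2.2
  have key : ∀ t : ℝ, HasDerivAt H 0 t := by
    intro t
    have hqd : HasDerivAt q (deriv q t) t :=
      ((hq.differentiable (by norm_num)) t).hasDerivAt
    have hq'd : HasDerivAt (deriv q) (deriv (deriv q) t) t :=
      ((hq'.differentiable (by norm_num)) t).hasDerivAt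
    have hcd : HasDerivAt (fun s => (q s, deriv q s))
        (deriv q t, deriv (deriv q) t) t := hqd.prodMk hq'd
    have hLd : HasDerivAt (fun s => L (q s, deriv q s))
        (fderiv ℝ L (q t, deriv q t) (deriv q t, deriv (deriv q) t)) t :=
      ((hL.differentiable (by norm_num) (q t, deriv q t)).hasFDerivAt).comp_hasDerivAt t hcd
    have hcomp : ∀ j : Fin n, HasDerivAt (fun s => deriv q s j)
        (deriv (deriv q) t j) t := fun j => by
      have := (ContinuousLinearMap.proj (R := ℝ) (φ := fun _ : Fin n => ℝ) j).hasFDerivAt.comp_hasDerivAt t hq'd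
      exact this
    have hsum : HasDerivAt
        (fun s => ∑ j, deriv q s j * fderiv ℝ L (q s, deriv q s) (0, Pi.single j 1))
        (∑ j, (deriv (deriv q) t j * fderiv ℝ L (q t, deriv q t) (0, Pi.single j 1)
          + deriv q t j * fderiv ℝ L (q t, deriv q t) (Pi.single j 1, 0))) t :=
      HasDerivAt.fun_sum fun j _ => (hcomp j).mul (hEL j t)
    have : HasDerivAt H
        ((∑ j, (deriv (deriv q) t j * fderiv ℝ L (q t, deriv q t) (0, Pi.single j 1)
          + deriv q t j * fderiv ℝ L (q t, deriv q t) (Pi.single j 1, 0)))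
          - fderiv ℝ L (q t, deriv q t) (deriv q t, deriv (deriv q) t)) t :=
      hsum.sub hLd
    have hz : (∑ j, (deriv (deriv q) t j * fderiv ℝ L (q t, deriv q t) (0, Pi.single j 1)
          + deriv q t j * fderiv ℝ L (q t, deriv q t) (Pi.single j 1, 0)))
          - fderiv ℝ L (q t, deriv q t) (deriv q t, deriv (deriv q) t) = 0 := by
      rw [clm_decomp (fderiv ℝ L (q t, deriv q t)) (deriv q t) (deriv (deriv q) t),
        Finset.sum_add_distrib]
      ring
    rwa [hz] at this
  intro s t
  have := is_const_of_deriv_eq_zero (f := H)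
    (fun x => (key x).differentiableAt) (fun x => (key x).deriv) s t
  simpa [hH] using this
end
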